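/- arXiv:2508.05348 — 4 statements merged into one kernel-verified Lean document; each statement's English description precedes it below -/
import Mathlib

section
/- Any finite set χ = {x_1, …, x_d} ⊂ ℝ containing at least one nonzero element admits a q-canonical prepartition, where q = dim_ℚ(span_ℚ(χ)) is the dimension of the rational span of χ viewed as a vector space over the field ℚ. -/
open scoped BigOperators
open Filter

noncomputable section

/-- Shannon entropy (natural logarithm) of a discrete mass function `f`. -/
def shannonEntropy {α : Type*} (f : α → ℝ) : ℝ := ∑' t, Real.negMulLog (f t)

/-- `f` is a genuine probability mass function on `ℝ`. -/
structure IsPMF (f : ℝ → ℝ) : Prop where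
  nonneg : ∀ x, 0 ≤ f x
  summable : Summable f
  total : ∑' x, f x = 1

/-- Mass function of the sum `T_N = X_1 + ⋯ + X_N` of `N` iid copies of a discrete
real random variable with mass function `f` (for `N = 0` the sum is the constant `0`). -/
def sumMass (f : ℝ → ℝ) : ℕ → ℝ → ℝ
  | 0, t => if t = 0 then 1 else 0
  | (N + 1), t => ∑' x : ℝ, f x * sumMass f N (t - x)

/-- Probability that a random variable with mass function `f` takes a value in `s`. -/
def probOf (f : ℝ → ℝ) (s : Set ℝ) : ℝ := ∑' x : s, f (x : ℝ)

/-- Conditional mass function of `f` given that the value lies in `s`. -/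
def condMass (f : ℝ → ℝ) (s : Set ℝ) : ℝ → ℝ :=
  s.indicator fun x => f x / probOf f s

/-- Mean of a discrete real random variable with mass function `f`. -/
def pmfMean (f : ℝ → ℝ) : ℝ := ∑' x : ℝ, f x * x

/-- Variance of a discrete real random variable with mass function `f`. -/
def pmfVar (f : ℝ → ℝ) : ℝ := ∑' x : ℝ, f x * (x - pmfMean f) ^ 2

/-- Mass function of the multinomial random vector recording the outcome counts of
`N` independent trials with `d` outcomes of probabilities `p`. -/
def multinomialMass (d N : ℕ) (p : Fin d → ℝ) : (Fin d → ℕ) → ℝ := fun n =>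
  if (∑ j, n j) = N then
    ((N.factorial : ℝ) / ∏ j, ((n j).factorial : ℝ)) * ∏ j, p j ^ n j
  else 0

/-- `h` is a span of the set `s`, i.e. `s ⊆ {h n + a : n ∈ ℤ}` for some `a`. -/
def IsSpanOf (s : Set ℝ) (h : ℝ) : Prop :=
  ∃ a : ℝ, s ⊆ {x : ℝ | ∃ n : ℤ, x = h * n + a}

/-- A lattice set: a subset of `{h n + a : n ∈ ℤ}` for some `h, a ∈ ℝ`. -/
def IsLatticeSet (s : Set ℝ) : Prop := ∃ h : ℝ, IsSpanOf s h

/-- `h` is the maximal span of `s`: the largest positive `h` with `s ⊆ {h n + a : n ∈ ℤ}`. -/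
def IsMaxSpan (s : Set ℝ) (h : ℝ) : Prop :=
  0 < h ∧ IsSpanOf s h ∧ ∀ h' : ℝ, 0 < h' → IsSpanOf s h' → h' ≤ h

/-- `S_m(s)`: the set of all sums of `m` not-necessarily-distinct elements of `s`. -/
def sumsOf (s : Set ℝ) (m : ℕ) : Set ℝ :=
  {t : ℝ | ∃ g : Fin m → ℝ, (∀ i, g i ∈ s) ∧ t = ∑ i, g i}

/-- A finite collection of sets of reals is incommensurable if each set is nonempty and
not `{0}`, and any total `∑_j y_j` with `y_j ∈ S_{m_j}(χ_j)` and fixed total number of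
summands `N = ∑_j m_j` determines the `y_j` uniquely. -/
def Incommensurable {α : Type*} [Fintype α] (χ : α → Set ℝ) : Prop :=
  (∀ j, (χ j).Nonempty ∧ χ j ≠ {0}) ∧
  ∀ (N : ℕ) (m n : α → ℕ), (∑ j, m j) = N → (∑ j, n j) = N →
    ∀ y y' : α → ℝ, (∀ j, y j ∈ sumsOf (χ j) (m j)) → (∀ j, y' j ∈ sumsOf (χ j) (n j)) →
      (∑ j, y j) = (∑ j, y' j) → ∀ j, y j = y' j

/-- A `k`-canonical prepartition of `χ`: pairwise disjoint nonempty lattice subsets of `χ`,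
none equal to `{0}`, forming an incommensurable collection. -/
def IsCanonicalPrepartition {k : ℕ} (χ : Set ℝ) (π : Fin k → Set ℝ) : Prop :=
  (∀ j, π j ⊆ χ) ∧ (∀ j, IsLatticeSet (π j)) ∧
  (∀ i j : Fin k, i ≠ j → Disjoint (π i) (π j)) ∧ Incommensurable π

/-- A collection is degenerate if all its members are singletons. -/
def IsDegenerate {k : ℕ} (π : Fin k → Set ℝ) : Prop := ∀ j, ∃ x : ℝ, π j = {x}

/-- The incommensurability rank of a set `χ ⊂ ℝ`: the maximal `r` such that `χ` admits a
non-degenerate `r`-canonical prepartition (`0` if there is none). -/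
def incommRank (χ : Set ℝ) : ℕ :=
  sSup {r : ℕ | ∃ π : Fin r → Set ℝ, IsCanonicalPrepartition χ π ∧ ¬ IsDegenerate π}

end
/-- Lemma 5. Any finite set `χ ⊂ ℝ` containing a nonzero element admits
a `q`-canonical prepartition, where `q = dim_ℚ span_ℚ(χ)`. -/
theorem exists_canonical_prepartition_rank_span (χ : Set ℝ) (hfin : χ.Finite)
    (hnz : ∃ x ∈ χ, x ≠ 0) :
    ∃ π : Fin (Module.finrank ℚ ↥(Submodule.span ℚ χ)) → Set ℝ,
      IsCanonicalPrepartition χ π := by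
  classical
  obtain ⟨b, hbχ, hspan, hli⟩ := exists_linearIndependent ℚ χ
  have hbfin : b.Finite := hfin.subset hbχ
  haveI : Fintype b := hbfin.fintype
  have hcard : Fintype.card b = Module.finrank ℚ ↥(Submodule.span ℚ χ) := by
    rw [← hspan, finrank_span_set_eq_card hli, Set.toFinset_card]
  let e := Fintype.equivFinOfCardEq hcard
  set c : Fin (Module.finrank ℚ ↥(Submodule.span ℚ χ)) → ℝ :=
    fun j => ((e.symm j : b) : ℝ) with hc
  have hinj : Function.Injective c := by
    intro i j hij
    exact e.symm.injective (Subtype.ext hij)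
  have hli2 : LinearIndependent ℚ c := hli.comp e.symm e.symm.injective
  have hcne : ∀ j, c j ≠ 0 := fun j => hli2.ne_zero j
  refine ⟨fun j => {c j}, ?_, ?_, ?_, ?_, ?_⟩
  · intro j x hx
    rw [Set.mem_singleton_iff] at hx
    subst hx
    exact hbχ (e.symm j).2
  · intro j
    exact ⟨1, c j, fun x hx => ⟨0, by simp [Set.mem_singleton_iff.mp hx]⟩⟩
  · intro i j hij
    rw [Set.disjoint_singleton]
    exact fun h => hij (hinj h)
  · exact fun j => ⟨⟨c j, rfl⟩, by simp [hcne j]⟩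
  · intro N m n hm hn y y' hy hy' hsum j
    have key : ∀ (mm : Fin (Module.finrank ℚ ↥(Submodule.span ℚ χ)) → ℕ)
        (yy : Fin (Module.finrank ℚ ↥(Submodule.span ℚ χ)) → ℝ),
        (∀ j, yy j ∈ sumsOf {c j} (mm j)) → ∀ j, yy j = (mm j : ℝ) * c j := by
      intro mm yy hyy j
      obtain ⟨g, hg, hgy⟩ := hyy j
      have : ∀ i, g i = c j := fun i => Set.mem_singleton_iff.mp (hg i)
      rw [hgy]
      simp [this, Finset.sum_const, nsmul_eq_mul]
    have hyeq := key m y hy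
    have hy'eq := key n y' hy'
    have hmn : ∀ j, m j = n j := by
      have h0 : ∑ i, (((m i : ℚ) - (n i : ℚ)) • c i) = 0 := by
        simp only [sub_smul]
        rw [Finset.sum_sub_distrib]
        have l : ∀ i, ((m i : ℚ)) • c i = (m i : ℝ) * c i := by
          intro i; rw [Rat.smul_def]; push_cast; ring
        have r : ∀ i, ((n i : ℚ)) • c i = (n i : ℝ) * c i := by
          intro i; rw [Rat.smul_def]; push_cast; ring
        simp only [l, r]
        rw [sub_eq_zero]
        calc ∑ i, (m i : ℝ) * c i = ∑ i, y i := by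
              exact (Finset.sum_congr rfl fun i _ => (hyeq i).symm)
          _ = ∑ i, y' i := hsum
          _ = ∑ i, (n i : ℝ) * c i := Finset.sum_congr rfl fun i _ => hy'eq i
      have := Fintype.linearIndependent_iff.mp hli2 (fun i => (m i : ℚ) - n i) h0
      intro i
      have hi : (m i : ℚ) - (n i : ℚ) = 0 := this i
      have : (m i : ℚ) = (n i : ℚ) := by linarith
      exact_mod_cast this
    rw [hyeq j, hy'eq j, hmn j]
end

section
/- Let {χ_1, …, χ_k} be an incommensurable collection of pairwise disjoint sets of real numbers and let i ≠ i' be two indices in {1, …, k}. Then the collection obtained by merging χ_i and χ_{i'} into their union, i.e. ({χ_1, …, χ_k} \ {χ_i, χ_{i'}}) ∪ {χ_i ∪ χ_{i'}}, is also incommensurable. -/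
open scoped BigOperators
open Filter

open Classical in
lemma mem_sumsOf_multiset {s : Set ℝ} {m : ℕ} {t : ℝ} :
    t ∈ sumsOf s m ↔
      ∃ l : Multiset ℝ, Multiset.card l = m ∧ (∀ x ∈ l, x ∈ s) ∧ t = l.sum := by
  constructor
  · rintro ⟨g, hg, rfl⟩
    refine ⟨Finset.univ.val.map g, by simp, ?_, ?_⟩
    · intro x hx
      obtain ⟨i, _, rfl⟩ := Multiset.mem_map.1 hx
      exact hg i
    · rfl
  · rintro ⟨l, hcard, hmem, rfl⟩
    have hL : l.toList.length = m := by
      rw [Multiset.length_toList, hcard]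
    refine ⟨fun i => l.toList.get (Fin.cast hL.symm i), ?_, ?_⟩
    · intro i
      exact hmem _ (Multiset.mem_toList.1 (List.get_mem _ _))
    · have h1 : ∑ i : Fin m, l.toList.get (Fin.cast hL.symm i)
          = ∑ i : Fin l.toList.length, l.toList.get i :=
        Fintype.sum_equiv (finCongr hL.symm) _ _ (fun i => rfl)
      rw [h1, ← List.sum_ofFn, List.ofFn_get, Multiset.sum_toList]

open Classical in
lemma sumsOf_union_split {s t : Set ℝ} {m : ℕ} {y : ℝ} (h : y ∈ sumsOf (s ∪ t) m) :
    ∃ a b u v, a + b = m ∧ u ∈ sumsOf s a ∧ v ∈ sumsOf t b ∧ y = u + v := by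
  rw [mem_sumsOf_multiset] at h
  obtain ⟨l, hcard, hmem, rfl⟩ := h
  set l₁ := l.filter (· ∈ s) with hl₁
  set l₂ := l.filter (fun x => ¬ x ∈ s) with hl₂
  have hadd : l₁ + l₂ = l := Multiset.filter_add_not _ l
  refine ⟨Multiset.card l₁, Multiset.card l₂, l₁.sum, l₂.sum, ?_, ?_, ?_, ?_⟩
  · rw [← Multiset.card_add, hadd, hcard]
  · exact mem_sumsOf_multiset.2 ⟨l₁, rfl, fun x hx => (Multiset.mem_filter.1 hx).2, rfl⟩
  · refine mem_sumsOf_multiset.2 ⟨l₂, rfl, fun x hx => ?_, rfl⟩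
    have h1 := Multiset.mem_filter.1 hx
    rcases hmem x h1.1 with h | h
    · exact absurd h h1.2
    · exact h
  · rw [← hadd, Multiset.sum_add]

lemma sum_eq_add_sum_subtype {k : ℕ} (i' : Fin k) {M : Type*} [AddCommMonoid M]
    (f : {j : Fin k // j ≠ i'} → M) (F : Fin k → M)
    (hF : ∀ j : {j : Fin k // j ≠ i'}, F j = f j) :
    ∑ j : Fin k, F j = F i' + ∑ j : {j : Fin k // j ≠ i'}, f j := by
  rw [← Finset.add_sum_erase _ F (Finset.mem_univ i')]
  congr 1
  rw [Finset.sum_subtype (p := fun j => j ≠ i') (Finset.univ.erase i')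
    (fun x => by simp [Finset.mem_erase]) F]
  exact Finset.sum_congr rfl fun j _ => hF j

lemma sum_split_at {ι : Type*} [Fintype ι] [DecidableEq ι] {M : Type*} [AddCommMonoid M]
    (f : ι → M) (a : ι) :
    ∑ j, f j = f a + ∑ j ∈ Finset.univ.erase a, f j :=
  (Finset.add_sum_erase _ f (Finset.mem_univ a)).symm

/-- Lemma 11, point 3. Merging two sets of an incommensurable
collection of pairwise disjoint sets of reals into their union yields an incommensurable
collection. -/
theorem incommensurable_merge (k : ℕ) (χ : Fin k → Set ℝ)
    (hdisj : ∀ i j : Fin k, i ≠ j → Disjoint (χ i) (χ j))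
    (hinc : Incommensurable χ) (i i' : Fin k) (hne : i ≠ i') :
    Incommensurable (fun j : {j : Fin k // j ≠ i'} =>
      if (j : Fin k) = i then χ i ∪ χ i' else χ (j : Fin k)) := by
  classical
  set ι := {j : Fin k // j ≠ i'}
  set ii : ι := ⟨i, hne⟩ with hii
  constructor
  · intro j
    by_cases hj : (j : Fin k) = i
    · simp only [hj, if_pos rfl]
      obtain ⟨x, hx⟩ := (hinc.1 i).1
      refine ⟨⟨x, Or.inl hx⟩, ?_⟩
      intro h
      have hsub : χ i ⊆ ({0} : Set ℝ) := h ▸ Set.subset_union_left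
      rcases Set.subset_singleton_iff_eq.1 hsub with h0 | h0
      · exact absurd h0 (Set.nonempty_iff_ne_empty.1 (hinc.1 i).1)
      · exact (hinc.1 i).2 h0
    · simp only [hj, if_neg hj]
      exact hinc.1 j
  · intro N m n hm hn y y' hy hy' hsum
    have hyi : y ii ∈ sumsOf (χ i ∪ χ i') (m ii) := by
      have := hy ii
      simpa only [show (ii : Fin k) = i from rfl, if_pos rfl, if_true] using this
    have hyi' : y' ii ∈ sumsOf (χ i ∪ χ i') (n ii) := by
      have := hy' ii
      simpa only [show (ii : Fin k) = i from rfl, if_pos rfl, if_true] using this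
    obtain ⟨a, b, u, v, hab, hu, hv, hyuv⟩ := sumsOf_union_split hyi
    obtain ⟨a', b', u', v', hab', hu', hv', hyuv'⟩ := sumsOf_union_split hyi'
    set M : Fin k → ℕ := fun j => if hj : j = i' then b else if j = i then a else m ⟨j, hj⟩
      with hM
    set M' : Fin k → ℕ := fun j => if hj : j = i' then b' else if j = i then a' else n ⟨j, hj⟩
      with hM'
    set Y : Fin k → ℝ := fun j => if hj : j = i' then v else if j = i then u else y ⟨j, hj⟩
      with hY
    set Y' : Fin k → ℝ := fun j => if hj : j = i' then v' else if j = i then u' else y' ⟨j, hj⟩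
      with hY'
    have hMrest : ∀ j : ι, M j = if (j : Fin k) = i then a else m j := by
      intro j; simp only [hM, dif_neg j.2, Subtype.coe_eta]
    have hM'rest : ∀ j : ι, M' j = if (j : Fin k) = i then a' else n j := by
      intro j; simp only [hM', dif_neg j.2, Subtype.coe_eta]
    have hYrest : ∀ j : ι, Y j = if (j : Fin k) = i then u else y j := by
      intro j; simp only [hY, dif_neg j.2, Subtype.coe_eta]
    have hY'rest : ∀ j : ι, Y' j = if (j : Fin k) = i then u' else y' j := by
      intro j; simp only [hY', dif_neg j.2, Subtype.coe_eta]
    have hMi' : M i' = b := by simp [hM]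
    have hM'i' : M' i' = b' := by simp [hM']
    have hYi' : Y i' = v := by simp [hY]
    have hY'i' : Y' i' = v' := by simp [hY']
    -- membership
    have hmemY : ∀ j, Y j ∈ sumsOf (χ j) (M j) := by
      intro j
      by_cases hj : j = i'
      · subst hj; rw [hMi', hYi']; exact hv
      · by_cases hji : j = i
        · subst hji
          rw [hMrest ⟨j, hj⟩, hYrest ⟨j, hj⟩]
          simp only [if_pos rfl]
          exact hu
        · rw [hMrest ⟨j, hj⟩, hYrest ⟨j, hj⟩]
          simp only [if_neg hji]
          have := hy ⟨j, hj⟩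
          simpa only [if_neg hji] using this
    have hmemY' : ∀ j, Y' j ∈ sumsOf (χ j) (M' j) := by
      intro j
      by_cases hj : j = i'
      · subst hj; rw [hM'i', hY'i']; exact hv'
      · by_cases hji : j = i
        · subst hji
          rw [hM'rest ⟨j, hj⟩, hY'rest ⟨j, hj⟩]
          simp only [if_pos rfl]
          exact hu'
        · rw [hM'rest ⟨j, hj⟩, hY'rest ⟨j, hj⟩]
          simp only [if_neg hji]
          have := hy' ⟨j, hj⟩
          simpa only [if_neg hji] using this
    -- sums of counts
    have key : ∀ (c : ℕ) (f : ι → ℕ) (F : Fin k → ℕ), F i' = c →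
        (∀ j : ι, F j = if (j : Fin k) = i then (f ii : ℕ) - 0 else f j) →
        True := fun _ _ _ _ _ => trivial
    have hiter : ∀ (g : ι → ℕ),
        ∑ j : ι, g j = g ii + ∑ j ∈ Finset.univ.erase ii, g j :=
      fun g => sum_split_at g ii
    have hoff : ∀ j : ι, j ≠ ii → (j : Fin k) ≠ i := by
      intro j hj h
      exact hj (Subtype.ext h)
    have hMsum : ∑ j, M j = N := by
      rw [sum_eq_add_sum_subtype i' (fun j : ι => M j) M (fun j => rfl), hMi']
      have h1 : ∑ j : ι, M ↑j
          = (M (ii : Fin k)) + ∑ j ∈ Finset.univ.erase ii, M ↑j := hiter _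
      have h2 : ∑ j : ι, m j = m ii + ∑ j ∈ Finset.univ.erase ii, m j := hiter m
      have h3 : ∑ j ∈ Finset.univ.erase ii, M ↑j
          = ∑ j ∈ Finset.univ.erase ii, m j := by
        refine Finset.sum_congr rfl fun j hj => ?_
        rw [hMrest j, if_neg (hoff j (Finset.mem_erase.1 hj).1)]
      have h4 : M (ii : Fin k) = a := by
        rw [hMrest ii, if_pos rfl]
      rw [h1, h3, h4]
      rw [hm] at h2
      omega
    have hM'sum : ∑ j, M' j = N := by
      rw [sum_eq_add_sum_subtype i' (fun j : ι => M' j) M' (fun j => rfl), hM'i']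
      have h1 : ∑ j : ι, M' ↑j
          = (M' (ii : Fin k)) + ∑ j ∈ Finset.univ.erase ii, M' ↑j := hiter _
      have h2 : ∑ j : ι, n j = n ii + ∑ j ∈ Finset.univ.erase ii, n j := hiter n
      have h3 : ∑ j ∈ Finset.univ.erase ii, M' ↑j
          = ∑ j ∈ Finset.univ.erase ii, n j := by
        refine Finset.sum_congr rfl fun j hj => ?_
        rw [hM'rest j, if_neg (hoff j (Finset.mem_erase.1 hj).1)]
      have h4 : M' (ii : Fin k) = a' := by
        rw [hM'rest ii, if_pos rfl]
      rw [h1, h3, h4]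
      rw [hn] at h2
      omega
    -- sums of values
    have hYtot : ∑ j, Y j = ∑ j : ι, y j := by
      rw [sum_eq_add_sum_subtype i' (fun j : ι => Y j) Y (fun j => rfl), hYi']
      have h1 : ∑ j : ι, Y ↑j
          = (Y (ii : Fin k)) + ∑ j ∈ Finset.univ.erase ii, Y ↑j := sum_split_at _ ii
      have h2 : ∑ j : ι, y j = y ii + ∑ j ∈ Finset.univ.erase ii, y j := sum_split_at y ii
      have h3 : ∑ j ∈ Finset.univ.erase ii, Y ↑j
          = ∑ j ∈ Finset.univ.erase ii, y j := by
        refine Finset.sum_congr rfl fun j hj => ?_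
        rw [hYrest j, if_neg (hoff j (Finset.mem_erase.1 hj).1)]
      have h4 : Y (ii : Fin k) = u := by
        rw [hYrest ii, if_pos rfl]
      rw [h1, h3, h4, h2, hyuv]
      ring
    have hY'tot : ∑ j, Y' j = ∑ j : ι, y' j := by
      rw [sum_eq_add_sum_subtype i' (fun j : ι => Y' j) Y' (fun j => rfl), hY'i']
      have h1 : ∑ j : ι, Y' ↑j
          = (Y' (ii : Fin k)) + ∑ j ∈ Finset.univ.erase ii, Y' ↑j := sum_split_at _ ii
      have h2 : ∑ j : ι, y' j = y' ii + ∑ j ∈ Finset.univ.erase ii, y' j := sum_split_at y' ii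
      have h3 : ∑ j ∈ Finset.univ.erase ii, Y' ↑j
          = ∑ j ∈ Finset.univ.erase ii, y' j := by
        refine Finset.sum_congr rfl fun j hj => ?_
        rw [hY'rest j, if_neg (hoff j (Finset.mem_erase.1 hj).1)]
      have h4 : Y' (ii : Fin k) = u' := by
        rw [hY'rest ii, if_pos rfl]
      rw [h1, h3, h4, h2, hyuv']
      ring
    have hYsum : ∑ j, Y j = ∑ j, Y' j := by rw [hYtot, hY'tot, hsum]
    have hall := hinc.2 N M M' hMsum hM'sum Y Y' hmemY hmemY' hYsum
    intro j
    by_cases hji : (j : Fin k) = i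
    · have hjeq : j = ii := Subtype.ext hji
      subst hjeq
      have h1 : u = u' := by
        have := hall i
        rw [hYrest ii, if_pos rfl, hY'rest ii, if_pos rfl] at this
        exact this
      have h2 : v = v' := by
        have := hall i'
        rwa [hYi', hY'i'] at this
      rw [hyuv, hyuv', h1, h2]
    · have := hall ↑j
      rwa [hYrest j, if_neg hji, hY'rest j, if_neg hji] at this
end

section
/- If χ ⊂ ℝ is a lattice set with |χ| ≥ 2, then its incommensurability rank equals 1: r(χ) = 1. In particular, no translate of χ admits a non-degenerate k-canonical prepartition with k ≥ 2. -/
open scoped BigOperators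
open Filter

lemma zero_mem_sumsOf_zero (s : Set ℝ) : (0:ℝ) ∈ sumsOf s 0 :=
  ⟨fun i => i.elim0, fun i => i.elim0, by simp⟩

lemma mem_sumsOf_two {s : Set ℝ} {u v : ℝ} (hu : u ∈ s) (hv : v ∈ s) (a b : ℕ) :
    (a : ℝ) * u + (b : ℝ) * v ∈ sumsOf s (a + b) := by
  refine ⟨fun i => if (i : ℕ) < a then u else v, fun i => ?_, ?_⟩
  · dsimp only; split <;> assumption
  · rw [Fin.sum_univ_eq_sum_range (fun i => if i < a then u else v) (a+b)]
    rw [Finset.range_eq_Ico, ← Finset.sum_Ico_consecutive _ (Nat.zero_le a) (Nat.le_add_right a b)]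
    have h1 : ∑ i ∈ Finset.Ico 0 a, (if i < a then u else v) = a * u := by
      rw [Finset.sum_congr rfl fun i hi => if_pos (Finset.mem_Ico.mp hi).2]
      simp [mul_comm]
    have h2 : ∑ i ∈ Finset.Ico a (a+b), (if i < a then u else v) = b * v := by
      rw [Finset.sum_congr rfl fun i hi => if_neg (not_lt.mpr (Finset.mem_Ico.mp hi).1)]
      simp [mul_comm]
    rw [h1, h2]

lemma key_no_prepartition (s : Set ℝ) (hs : IsLatticeSet s) {k : ℕ} (hk : 2 ≤ k)
    (π : Fin k → Set ℝ) (hπ : IsCanonicalPrepartition s π) (hnd : ¬ IsDegenerate π) :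
    False := by
  obtain ⟨h, a, hsub⟩ := hs
  obtain ⟨hsubπ, _, _, hnz, hinc⟩ := hπ
  -- find an index with a non-singleton part
  have hj0 : ∃ j0 : Fin k, ¬ ∃ x : ℝ, π j0 = {x} := by
    by_contra hc; push_neg at hc
    exact hnd fun j => by obtain ⟨x, hx⟩ := hc j; exact ⟨x, hx⟩
  obtain ⟨j0, hj0⟩ := hj0
  obtain ⟨w, hw⟩ := (hnz j0).1
  have hx' : ∃ x' ∈ π j0, x' ≠ w := by
    by_contra hc; push_neg at hc
    exact hj0 ⟨w, Set.eq_singleton_iff_unique_mem.mpr ⟨hw, fun y hy => by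
      by_contra hne; exact hne (hc y hy) ⟩⟩
  obtain ⟨x', hx'mem, hx'ne⟩ := hx'
  set x := w with hxdef
  have hxmem : x ∈ π j0 := hw
  -- another index
  have : ∃ j1 : Fin k, j1 ≠ j0 := by
    haveI : Nontrivial (Fin k) := Fin.nontrivial_iff_two_le.mpr hk
    exact exists_ne j0
  obtain ⟨j1, hj1ne⟩ := this
  -- nonzero element of π j1
  have hz : ∃ z ∈ π j1, z ≠ 0 := by
    by_contra hc; push_neg at hc
    exact (hnz j1).2 (Set.Nonempty.subset_singleton_iff (hnz j1).1 |>.mp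
      (fun y hy => hc y hy))
  obtain ⟨z, hzmem, hzne⟩ := hz
  -- lattice coordinates
  obtain ⟨nx, hnx⟩ := hsub (hsubπ j0 hxmem)
  obtain ⟨nx', hnx'⟩ := hsub (hsubπ j0 hx'mem)
  obtain ⟨np, hnp⟩ := hsub (hsubπ j1 hzmem)
  have hne : h ≠ 0 := by
    intro h0; apply hx'ne; rw [hnx', hnx, h0]; ring
  have hd : nx' - nx ≠ 0 := by
    intro h0
    apply hx'ne
    have : nx' = nx := by omega
    rw [hnx', hnx, this]
  set d : ℤ := nx' - nx with hddef
  have hsd : d.sign * d = (d.natAbs : ℤ) := by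
    rcases lt_trichotomy d 0 with hlt | heq | hgt
    · rw [Int.sign_eq_neg_one_of_neg hlt]; omega
    · exact absurd heq hd
    · rw [Int.sign_eq_one_of_pos hgt]; omega
  set t : ℕ := d.natAbs with htdef
  have ht : 1 ≤ t := by omega
  set e : ℤ := (np - nx) * d.sign with hedef
  have He : e * d = (np - nx) * (t : ℤ) := by
    rw [hedef, mul_assoc, hsd]
  set ja : ℕ := e.natAbs with hjadef
  set jb : ℕ := (e + e.natAbs).toNat with hjbdef
  have Hjb : (jb : ℤ) = (ja : ℤ) + e := by omega
  set M : ℕ := 2 * ja with hMdef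
  have hjaM : ja ≤ M := by omega
  have hjbM : jb ≤ M + t := by omega
  -- the two competing decompositions
  set A : ℝ := ((M - ja : ℕ) : ℝ) * x + (ja : ℝ) * x' with hAdef
  set B : ℝ := ((M + t - jb : ℕ) : ℝ) * x + (jb : ℝ) * x' with hBdef
  have hA : A ∈ sumsOf (π j0) M := by
    have := mem_sumsOf_two hxmem hx'mem (M - ja) ja
    rwa [Nat.sub_add_cancel hjaM] at this
  have hB : B ∈ sumsOf (π j0) (M + t) := by
    have := mem_sumsOf_two hxmem hx'mem (M + t - jb) jb
    rwa [Nat.sub_add_cancel hjbM] at this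
  have hTZ : (t : ℝ) * z ∈ sumsOf (π j1) t := by
    have := mem_sumsOf_two hzmem hzmem t 0
    simpa using this
  -- the fundamental arithmetic identity : B = A + t * z
  have HeR : (e : ℝ) * ((nx' : ℝ) - (nx : ℝ)) = ((np : ℝ) - (nx : ℝ)) * (t : ℝ) := by
    have He' := He
    rw [hddef] at He'
    exact_mod_cast He'
  have HjbR : (jb : ℝ) = (ja : ℝ) + (e : ℝ) := by exact_mod_cast Hjb
  have HAB : B = A + (t : ℝ) * z := by
    rw [hAdef, hBdef, hnx, hnx', hnp]
    rw [Nat.cast_sub hjaM, Nat.cast_sub hjbM]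
    push_cast
    linear_combination (h * (nx' : ℝ) - h * (nx : ℝ)) * HjbR + h * HeR
  -- set up the incommensurability contradiction
  set mfun : Fin k → ℕ := fun i => (if i = j0 then M else 0) + (if i = j1 then t else 0)
    with hmfun
  set nfun : Fin k → ℕ := fun i => if i = j0 then M + t else 0 with hnfun
  set yfun : Fin k → ℝ := fun i => (if i = j0 then A else 0) + (if i = j1 then (t:ℝ)*z else 0)
    with hyfun
  set y'fun : Fin k → ℝ := fun i => if i = j0 then B else 0 with hy'fun
  have hj0j1 : j0 ≠ j1 := fun hh => hj1ne hh.symm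
  have hmsum : (∑ j, mfun j) = M + t := by
    rw [hmfun]; rw [Finset.sum_add_distrib]
    simp [Finset.sum_ite_eq']
  have hnsum : (∑ j, nfun j) = M + t := by
    rw [hnfun]; simp [Finset.sum_ite_eq']
  have hysum : (∑ j, yfun j) = A + (t:ℝ)*z := by
    rw [hyfun]; rw [Finset.sum_add_distrib]
    simp [Finset.sum_ite_eq']
  have hy'sum : (∑ j, y'fun j) = B := by
    rw [hy'fun]; simp [Finset.sum_ite_eq']
  have hymem : ∀ j, yfun j ∈ sumsOf (π j) (mfun j) := by
    intro j
    by_cases hj : j = j0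
    · subst hj
      simp only [hyfun, hmfun, if_pos rfl, if_neg hj0j1, add_zero]
      exact hA
    · by_cases hj' : j = j1
      · subst hj'
        simp only [hyfun, hmfun, if_neg hj, if_pos rfl, zero_add]
        exact hTZ
      · simp only [hyfun, hmfun, if_neg hj, if_neg hj', add_zero]
        exact zero_mem_sumsOf_zero _
  have hy'mem : ∀ j, y'fun j ∈ sumsOf (π j) (nfun j) := by
    intro j
    by_cases hj : j = j0
    · subst hj; simp only [hy'fun, hnfun, if_pos rfl]; exact hB
    · simp only [hy'fun, hnfun, if_neg hj]; exact zero_mem_sumsOf_zero _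
  have heq := hinc (M + t) mfun nfun hmsum hnsum yfun y'fun hymem hy'mem
    (by rw [hysum, hy'sum, HAB]) j0
  have : A = B := by simpa [hyfun, hy'fun, if_pos rfl, if_neg hj0j1] using heq
  have : (t : ℝ) * z = 0 := by linarith [HAB]
  have htne : (t : ℝ) ≠ 0 := by positivity
  exact hzne (by
    rcases mul_eq_zero.mp this with h1 | h1
    · exact absurd h1 htne
    · exact h1)

/-- Lemma 13, first direction. A lattice set `χ ⊂ ℝ` with at least two
elements has incommensurability rank `1`; in particular, no translate of `χ` admits a
non-degenerate `k`-canonical prepartition with `k ≥ 2`. -/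
theorem incommRank_of_lattice (χ : Set ℝ) (hlat : IsLatticeSet χ) (hnt : χ.Nontrivial) :
    incommRank χ = 1 ∧
    ∀ (a : ℝ) (k : ℕ), 2 ≤ k →
      ¬ ∃ π : Fin k → Set ℝ,
          IsCanonicalPrepartition ((fun x => x + a) '' χ) π ∧ ¬ IsDegenerate π := by
  constructor
  · -- incommRank χ = 1
    have h1 : (1 : ℕ) ∈ {r : ℕ | ∃ π : Fin r → Set ℝ,
        IsCanonicalPrepartition χ π ∧ ¬ IsDegenerate π} := by
      refine ⟨fun _ => χ, ⟨fun _ => subset_rfl, fun _ => hlat, fun i j hij =>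
        absurd (Subsingleton.elim i j) hij, ⟨fun _ => ⟨hnt.nonempty, ?_⟩, ?_⟩⟩, ?_⟩
      · intro hχ
        have hχ' : χ = {0} := hχ
        obtain ⟨u, hu, v, hv, huv⟩ := hnt
        rw [hχ'] at hu hv
        exact huv (hu.trans hv.symm)
      · intro N m n hm hn y y' hy hy' hsum j
        have h0 : j = 0 := Subsingleton.elim j 0
        rw [h0]
        rw [Fin.sum_univ_one, Fin.sum_univ_one] at hsum
        exact hsum
      · intro hdeg
        obtain ⟨u, hu⟩ := hdeg 0
        have hu' : χ = {u} := hu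
        obtain ⟨p, hp, q, hq, hpq⟩ := hnt
        rw [hu'] at hp hq
        exact hpq (hp.trans hq.symm)
    have h2 : ∀ r ∈ {r : ℕ | ∃ π : Fin r → Set ℝ,
        IsCanonicalPrepartition χ π ∧ ¬ IsDegenerate π}, r = 1 := by
      rintro r ⟨π, hπ, hnd⟩
      rcases Nat.lt_or_ge r 2 with hr | hr
      · interval_cases r
        · exact absurd (fun j => j.elim0) hnd
        · rfl
      · exact absurd trivial fun _ => key_no_prepartition χ hlat hr π hπ hnd
    have hset : {r : ℕ | ∃ π : Fin r → Set ℝ,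
        IsCanonicalPrepartition χ π ∧ ¬ IsDegenerate π} = {1} :=
      Set.eq_singleton_iff_unique_mem.mpr ⟨h1, h2⟩
    rw [incommRank, hset]
    exact csSup_singleton 1
  · intro a k hk ⟨π, hπ, hnd⟩
    have hlat' : IsLatticeSet ((fun x => x + a) '' χ) := by
      obtain ⟨h, b, hsub⟩ := hlat
      refine ⟨h, b + a, ?_⟩
      rintro _ ⟨x, hx, rfl⟩
      obtain ⟨n, hn⟩ := hsub hx
      exact ⟨n, by rw [hn]; ring⟩
    exact key_no_prepartition _ hlat' hk π hπ hnd
end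

section
/- If χ ⊂ ℝ is a finite set with |χ| ≥ 2 whose incommensurability rank satisfies r(χ) = 1 (equivalently, χ admits no non-degenerate k-canonical prepartition with k ≥ 2), then χ is a lattice set, i.e. there exist a, h ∈ ℝ such that χ ⊆ {h·n + a : n ∈ ℤ}. -/
open scoped BigOperators
open Filter

section AuxProofs

lemma sumsOf_singleton_mem {c y : ℝ} {m : ℕ} (hy : y ∈ sumsOf {c} m) : y = m * c := by
  obtain ⟨g, hg, rfl⟩ := hy
  have h : ∀ i, g i = c := fun i => hg i
  simp [h, Finset.sum_const, mul_comm]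

lemma sumsOf_pair_mem {a b y : ℝ} {m : ℕ} (hy : y ∈ sumsOf {a, b} m) :
    ∃ p : ℕ, p ≤ m ∧ y = m * a + p * (b - a) := by
  obtain ⟨g, hg, rfl⟩ := hy
  refine ⟨(Finset.univ.filter fun i => g i ≠ a).card, (Finset.card_filter_le _ _).trans (by simp), ?_⟩
  have h1 : ∑ i, g i = (∑ _i : Fin m, a) + ∑ i : Fin m, (g i - a) := by
    rw [← Finset.sum_add_distrib]; simp
  have h2 : ∑ i : Fin m, (g i - a) =
      ∑ i ∈ Finset.univ.filter fun i => g i ≠ a, (g i - a) :=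
    (Finset.sum_filter_of_ne (fun i _ h => sub_ne_zero.mp h)).symm
  have h3 : ∑ i ∈ Finset.univ.filter fun i => g i ≠ a, (g i - a) =
      ∑ _i ∈ Finset.univ.filter fun i => g i ≠ a, (b - a) := by
    refine Finset.sum_congr rfl fun i hi => ?_
    have hia : g i ≠ a := (Finset.mem_filter.mp hi).2
    have : g i ∈ ({a, b} : Set ℝ) := hg i
    rcases this with h | h
    · exact absurd h hia
    · rw [h]
  rw [h1, h2, h3]
  simp [Finset.sum_const, mul_comm]; ring

lemma exists_prepartition (χ : Set ℝ) (a b c : ℝ) (ha : a ∈ χ) (hb : b ∈ χ) (hc : c ∈ χ)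
    (hab : a ≠ b) (hca : c ≠ a) (hcb : c ≠ b) (hc0 : c ≠ 0)
    (hirr : ∀ δ z : ℤ, δ ≠ 0 → (δ : ℝ) * (c - a) ≠ (z : ℝ) * (b - a)) :
    ∃ π : Fin 2 → Set ℝ, IsCanonicalPrepartition χ π ∧ ¬ IsDegenerate π := by
  refine ⟨![({a, b} : Set ℝ), {c}], ⟨?_, ?_, ?_, ?_, ?_⟩, ?_⟩
  · -- subsets
    intro j
    fin_cases j
    · intro x hx; rcases hx with h | h
      · rw [h]; exact ha
      · rw [h]; exact hb
    · intro x hx; rw [hx]; exact hc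
  · -- lattice
    intro j
    fin_cases j
    · refine ⟨b - a, a, ?_⟩
      rintro x (h | h)
      · exact ⟨0, by rw [h]; push_cast; ring⟩
      · exact ⟨1, by rw [h]; push_cast; ring⟩
    · exact ⟨1, c, fun x hx => ⟨0, by rw [hx]; push_cast; ring⟩⟩
  · -- disjoint
    intro i j hij
    fin_cases i <;> fin_cases j
    · exact absurd rfl hij
    · show Disjoint ({a, b} : Set ℝ) {c}
      rw [Set.disjoint_singleton_right]
      rintro (h | h)
      · exact hca h
      · exact hcb h
    · show Disjoint ({c} : Set ℝ) {a, b}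
      rw [Set.disjoint_singleton_left]
      rintro (h | h)
      · exact hca h
      · exact hcb h
    · exact absurd rfl hij
  · -- nonempty and not {0}
    intro j
    fin_cases j
    · refine ⟨⟨a, Or.inl rfl⟩, fun h => ?_⟩
      have h' : ({a, b} : Set ℝ) = {0} := h
      have h1 : a ∈ ({a, b} : Set ℝ) := Or.inl rfl
      have h2 : b ∈ ({a, b} : Set ℝ) := Or.inr rfl
      rw [h'] at h1 h2
      exact hab (h1.trans h2.symm)
    · refine ⟨⟨c, rfl⟩, fun h => hc0 ?_⟩
      have h' : ({c} : Set ℝ) = {0} := h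
      have : c ∈ ({c} : Set ℝ) := rfl
      rw [h'] at this; exact this
  · -- incommensurability equations
    intro N m n hm hn y y' hy hy' hsum j
    obtain ⟨p, hp, hy0⟩ := sumsOf_pair_mem (hy 0)
    obtain ⟨q, hq, hy'0⟩ := sumsOf_pair_mem (hy' 0)
    have hy1 : y 1 = (m 1 : ℝ) * c := sumsOf_singleton_mem (hy 1)
    have hy'1 : y' 1 = (n 1 : ℝ) * c := sumsOf_singleton_mem (hy' 1)
    simp only [Fin.sum_univ_two] at hsum hm hn
    have e1 : (m 0 : ℝ) * a + p * (b - a) + (m 1 : ℝ) * c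
        = (n 0 : ℝ) * a + q * (b - a) + (n 1 : ℝ) * c := by
      rw [← hy0, ← hy'0, ← hy1, ← hy'1]; exact hsum
    have e2 : (m 0 : ℝ) + m 1 = (n 0 : ℝ) + n 1 := by
      have h : m 0 + m 1 = n 0 + n 1 := by omega
      exact_mod_cast congrArg (Nat.cast : ℕ → ℝ) h
    have key : ((m 1 : ℝ) - (n 1 : ℝ)) * (c - a) = ((q : ℝ) - (p : ℝ)) * (b - a) := by
      linear_combination e1 - a * e2
    have hm1 : m 1 = n 1 := by
      by_contra hd
      refine hirr ((m 1 : ℤ) - n 1) ((q : ℤ) - p) (by omega) ?_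
      push_cast
      linear_combination key
    have hpq : (p : ℝ) = q := by
      rw [hm1, sub_self, zero_mul] at key
      have hba : b - a ≠ 0 := sub_ne_zero.mpr (Ne.symm hab)
      rcases mul_eq_zero.mp key.symm with h | h
      · linarith [sub_eq_zero.mp h]
      · exact absurd h hba
    have hm0 : m 0 = n 0 := by omega
    fin_cases j
    · show y 0 = y' 0
      rw [hy0, hy'0, hm0, hpq]
    · show y 1 = y' 1
      rw [hy1, hy'1, hm1]
  · -- non-degenerate
    intro h
    obtain ⟨x, hx⟩ := h 0
    have hx' : ({a, b} : Set ℝ) = {x} := hx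
    have h1 : a ∈ ({a, b} : Set ℝ) := Or.inl rfl
    have h2 : b ∈ ({a, b} : Set ℝ) := Or.inr rfl
    rw [hx'] at h1 h2
    exact hab (h1.trans h2.symm)

lemma lattice_of_ratios (χ : Set ℝ) (hfin : χ.Finite) (x₀ x₁ : ℝ)
    (H : ∀ x ∈ χ, ∃ q : ℚ, x - x₀ = (q : ℝ) * (x₁ - x₀)) : IsLatticeSet χ := by
  have H' : ∀ x : ℝ, ∃ q : ℚ, x ∈ χ → x - x₀ = (q : ℝ) * (x₁ - x₀) := by
    intro x
    by_cases hx : x ∈ χ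
    · obtain ⟨q, hq⟩ := H x hx; exact ⟨q, fun _ => hq⟩
    · exact ⟨0, fun h => absurd h hx⟩
  choose f hf using H'
  set D : ℕ := ∏ x ∈ hfin.toFinset, (f x).den with hD
  have hDpos : 0 < D := Finset.prod_pos fun x _ => (f x).den_pos
  refine ⟨(x₁ - x₀) / D, x₀, ?_⟩
  intro x hx
  have hdvd : (f x).den ∣ D := Finset.dvd_prod_of_mem _ (hfin.mem_toFinset.mpr hx)
  obtain ⟨k, hk⟩ := hdvd
  refine ⟨(f x).num * k, ?_⟩
  have hq := hf x hx
  have hden : ((f x).den : ℝ) ≠ 0 := Nat.cast_ne_zero.mpr (f x).den_nz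
  have hcast : (((f x).num * k : ℤ) : ℝ) = (f x : ℝ) * D := by
    rw [hD] at hk ⊢
    rw [hk]
    push_cast
    rw [Rat.cast_def]
    field_simp
  have hDne : (D : ℝ) ≠ 0 := Nat.cast_ne_zero.mpr hDpos.ne'
  have : (x₁ - x₀) / D * (((f x).num * k : ℤ) : ℝ) + x₀
      = (f x : ℝ) * (x₁ - x₀) + x₀ := by
    rw [hcast]; field_simp
  rw [this, ← hq]; ring

end AuxProofs


/-- Lemma 13, converse direction. A finite set `χ ⊂ ℝ` with at least two
elements and incommensurability rank `1` is a lattice set. -/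
theorem lattice_of_incommRank_one (χ : Set ℝ) (hfin : χ.Finite) (hcard : 2 ≤ χ.ncard)
    (hr : incommRank χ = 1) : IsLatticeSet χ := by
  by_contra hnl
  obtain ⟨x₀, x₁, hx₀, hx₁, hne⟩ := (Set.one_lt_ncard_iff hfin).mp (by omega)
  have hex : ∃ x₂ ∈ χ, ∀ q : ℚ, x₂ - x₀ ≠ (q : ℝ) * (x₁ - x₀) := by
    by_contra h
    push_neg at h
    exact hnl (lattice_of_ratios χ hfin x₀ x₁ h)
  obtain ⟨x₂, hx₂, H⟩ := hex
  have h20 : x₂ ≠ x₀ := fun h => H 0 (by rw [h]; push_cast; ring)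
  have h21 : x₂ ≠ x₁ := fun h => H 1 (by rw [h]; push_cast; ring)
  have hprep : ∃ π : Fin 2 → Set ℝ, IsCanonicalPrepartition χ π ∧ ¬ IsDegenerate π := by
    by_cases h2z : x₂ = 0
    · -- use a = x₀, b = x₂, c = x₁
      have hc0 : x₁ ≠ 0 := fun h => h21 (by rw [h2z, h])
      refine exists_prepartition χ x₀ x₂ x₁ hx₀ hx₂ hx₁ (Ne.symm h20) (Ne.symm hne) (Ne.symm h21) hc0 ?_
      intro δ z hδ heq
      have hδr : (δ : ℝ) ≠ 0 := Int.cast_ne_zero.mpr hδ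
      by_cases hz : z = 0
      · rw [hz] at heq
        push_cast at heq
        have h0 : (δ : ℝ) * (x₁ - x₀) = 0 := by linarith
        rcases mul_eq_zero.mp h0 with h | h
        · exact hδr h
        · exact hne (sub_eq_zero.mp h).symm
      · have hzr : (z : ℝ) ≠ 0 := Int.cast_ne_zero.mpr hz
        apply H ((δ : ℚ) / (z : ℚ))
        push_cast
        field_simp
        linear_combination -heq
    · -- use a = x₀, b = x₁, c = x₂
      refine exists_prepartition χ x₀ x₁ x₂ hx₀ hx₁ hx₂ hne h20 h21 h2z ?_
      intro δ z hδ heq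
      have hδr : (δ : ℝ) ≠ 0 := Int.cast_ne_zero.mpr hδ
      apply H ((z : ℚ) / (δ : ℚ))
      push_cast
      field_simp
      linear_combination heq
  obtain ⟨π, hπ, hnd⟩ := hprep
  have h2 : 2 ∈ {r : ℕ | ∃ π : Fin r → Set ℝ,
      IsCanonicalPrepartition χ π ∧ ¬ IsDegenerate π} := ⟨π, hπ, hnd⟩
  unfold incommRank at hr
  by_cases hbdd : BddAbove {r : ℕ | ∃ π : Fin r → Set ℝ,
      IsCanonicalPrepartition χ π ∧ ¬ IsDegenerate π}
  · have := le_csSup hbdd h2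
    omega
  · rw [csSup_of_not_bddAbove hbdd, csSup_empty] at hr
    exact absurd hr (by decide)
end
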